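/- Let $\mu$ be a shift-invariant Borel probability measure on $\mathbb{N}_2^{\mathbb{N}} \times \mathbb{N}_2^{\mathbb{N}}$ (shift $\sigma$ acting diagonally) such that $\int \pi_1(\omega)^2 \, d\mu(\omega) < \infty$ and $\int \pi_2(\omega)^2 \, d\mu(\omega) < \infty$, where $\pi_1, \pi_2$ give the first coordinates of each sequence. Then for $\mu$-almost every $(P, Q) = ((p_n), (q_n))$, $\sum_{k=1}^{\infty} \sum_{j=k+1}^{\infty} \frac{p_k (p_j + q_j)}{q_1 \cdots q_j} < \infty$. -/

import Mathlib

open Filter MeasureTheory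
open scoped ENNReal NNReal

abbrev NSeq : Type := ℕ → {k : ℕ // 2 ≤ k}

def shift (ω : NSeq) : NSeq := fun n => ω (n + 1)

lemma shift_iterate (n : ℕ) (x : NSeq) (m : ℕ) : (shift^[n] x) m = x (m + n) := by
  induction n generalizing x with
  | zero => rfl
  | succ n ih => rw [Function.iterate_succ_apply, ih]; rfl

lemma meas1 (n : ℕ) : Measurable fun ω : NSeq × NSeq => ((ω.1 n : ℕ) : ℝ) :=
  (measurable_of_countable (fun k : {k : ℕ // 2 ≤ k} => ((k : ℕ) : ℝ))).comp
    ((measurable_pi_apply n).comp measurable_fst)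

lemma meas2 (n : ℕ) : Measurable fun ω : NSeq × NSeq => ((ω.2 n : ℕ) : ℝ) :=
  (measurable_of_countable (fun k : {k : ℕ // 2 ≤ k} => ((k : ℕ) : ℝ))).comp
    ((measurable_pi_apply n).comp measurable_snd)


theorem stmt10 (μ : Measure (NSeq × NSeq)) [IsProbabilityMeasure μ]
    (hinv : MeasurePreserving (Prod.map shift shift) μ μ)
    (hi1 : Integrable (fun ω : NSeq × NSeq => ((ω.1 0 : ℕ) : ℝ) ^ 2) μ)
    (hi2 : Integrable (fun ω : NSeq × NSeq => ((ω.2 0 : ℕ) : ℝ) ^ 2) μ) :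
    ∀ᵐ ω ∂μ, Summable (fun kj : ℕ × ℕ => if kj.1 < kj.2 then
      ((ω.1 kj.1 : ℕ) : ℝ) * (((ω.1 kj.2 : ℕ) : ℝ) + ((ω.2 kj.2 : ℕ) : ℝ)) /
        ∏ i ∈ Finset.range (kj.2 + 1), ((ω.2 i : ℕ) : ℝ) else 0) := by
  set f : ℕ × ℕ → NSeq × NSeq → ℝ := fun kj ω => if kj.1 < kj.2 then
      ((ω.1 kj.1 : ℕ) : ℝ) * (((ω.1 kj.2 : ℕ) : ℝ) + ((ω.2 kj.2 : ℕ) : ℝ)) /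
        ∏ i ∈ Finset.range (kj.2 + 1), ((ω.2 i : ℕ) : ℝ) else 0 with hf
  have hfnn : ∀ kj ω, 0 ≤ f kj ω := by
    intro kj ω
    simp only [hf]
    split_ifs
    · apply div_nonneg <;> positivity
    · exact le_rfl
  have hfmeas : ∀ kj, Measurable (f kj) := by
    intro kj
    by_cases h : kj.1 < kj.2 <;> simp only [hf, h, if_true, if_false]
    · exact ((meas1 kj.1).mul ((meas1 kj.2).add (meas2 kj.2))).div
        (Finset.measurable_prod _ fun i _ => meas2 i)
    · exact measurable_const
  -- the constants
  set A : ℝ≥0∞ := ∫⁻ ω, ENNReal.ofReal (((ω.1 0 : ℕ) : ℝ) ^ 2) ∂μ with hA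
  set B : ℝ≥0∞ := ∫⁻ ω, ENNReal.ofReal (((ω.2 0 : ℕ) : ℝ) ^ 2) ∂μ with hB
  have hAfin : A ≠ ⊤ := by
    have h := hi1.2
    rw [HasFiniteIntegral] at h
    have : A = ∫⁻ ω, (‖((ω.1 0 : ℕ) : ℝ) ^ 2‖₊ : ℝ≥0∞) ∂μ := by
      apply lintegral_congr; intro ω
      rw [← Real.enorm_eq_ofReal (by positivity)]; rfl
    rw [this]; exact h.ne
  have hBfin : B ≠ ⊤ := by
    have h := hi2.2
    rw [HasFiniteIntegral] at h
    have : B = ∫⁻ ω, (‖((ω.2 0 : ℕ) : ℝ) ^ 2‖₊ : ℝ≥0∞) ∂μ := by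
      apply lintegral_congr; intro ω
      rw [← Real.enorm_eq_ofReal (by positivity)]; rfl
    rw [this]; exact h.ne
  -- shift invariance
  have hiter : ∀ n (ω : NSeq × NSeq), (Prod.map shift shift)^[n] ω
      = (shift^[n] ω.1, shift^[n] ω.2) := by
    intro n ω; rw [Prod.map_iterate]; rfl
  have hInv1 : ∀ n, (∫⁻ ω, ENNReal.ofReal (((ω.1 n : ℕ) : ℝ) ^ 2) ∂μ) = A := by
    intro n
    have hm : Measurable fun ω : NSeq × NSeq => ENNReal.ofReal (((ω.1 0 : ℕ) : ℝ) ^ 2) :=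
      ENNReal.measurable_ofReal.comp ((meas1 0).pow measurable_const)
    have := (hinv.iterate n).lintegral_comp hm
    rw [hA, ← this]
    apply lintegral_congr; intro ω
    rw [hiter n ω]
    simp [shift_iterate]
  have hInv2 : ∀ n, (∫⁻ ω, ENNReal.ofReal (((ω.2 n : ℕ) : ℝ) ^ 2) ∂μ) = B := by
    intro n
    have hm : Measurable fun ω : NSeq × NSeq => ENNReal.ofReal (((ω.2 0 : ℕ) : ℝ) ^ 2) :=
      ENNReal.measurable_ofReal.comp ((meas2 0).pow measurable_const)
    have := (hinv.iterate n).lintegral_comp hm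
    rw [hB, ← this]
    apply lintegral_congr; intro ω
    rw [hiter n ω]
    simp [shift_iterate]
  set K : ℝ≥0∞ := 3 * A + B with hK
  have hKfin : K ≠ ⊤ := by
    rw [hK]
    exact ENNReal.add_ne_top.2 ⟨ENNReal.mul_ne_top (by norm_num) hAfin, hBfin⟩
  -- pointwise bound (k < j)
  have hptwise : ∀ kj : ℕ × ℕ, kj.1 < kj.2 → ∀ ω : NSeq × NSeq,
      f kj ω ≤ (2 * ((ω.1 kj.1 : ℕ) : ℝ) ^ 2 + ((ω.1 kj.2 : ℕ) : ℝ) ^ 2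
        + ((ω.2 kj.2 : ℕ) : ℝ) ^ 2) * (2⁻¹ : ℝ) ^ kj.2 := by
    intro kj hkj ω
    obtain ⟨k, j⟩ := kj
    simp only [hf, if_pos hkj]
    set p₁ : ℝ := ((ω.1 k : ℕ) : ℝ)
    set p₂ : ℝ := ((ω.1 j : ℕ) : ℝ)
    set q₂ : ℝ := ((ω.2 j : ℕ) : ℝ)
    have hp₁ : 0 ≤ p₁ := by positivity
    have hp₂ : 0 ≤ p₂ := by positivity
    have hq₂ : 0 ≤ q₂ := by positivity
    have hD : (2:ℝ) ^ (j + 1) ≤ ∏ i ∈ Finset.range (j + 1), ((ω.2 i : ℕ) : ℝ) := by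
      rw [show ((2:ℝ) ^ (j+1)) = ∏ _i ∈ Finset.range (j + 1), (2:ℝ) by
        simp [Finset.prod_const]]
      apply Finset.prod_le_prod (fun i _ => by norm_num)
      intro i _
      exact_mod_cast (ω.2 i).2
    have hDpos : (0:ℝ) < ∏ i ∈ Finset.range (j + 1), ((ω.2 i : ℕ) : ℝ) :=
      lt_of_lt_of_le (by positivity) hD
    have hnum : p₁ * (p₂ + q₂) ≤ 2 * p₁ ^ 2 + p₂ ^ 2 + q₂ ^ 2 := by
      nlinarith [sq_nonneg (p₁ - p₂), sq_nonneg (p₁ - q₂), sq_nonneg p₁, sq_nonneg p₂, sq_nonneg q₂]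
    calc p₁ * (p₂ + q₂) / ∏ i ∈ Finset.range (j + 1), ((ω.2 i : ℕ) : ℝ)
        ≤ p₁ * (p₂ + q₂) / (2:ℝ) ^ (j + 1) := by
          apply div_le_div_of_nonneg_left (by positivity) (by positivity) hD
      _ ≤ (2 * p₁ ^ 2 + p₂ ^ 2 + q₂ ^ 2) / (2:ℝ) ^ (j + 1) := by
          apply div_le_div_of_nonneg_right hnum (by positivity)
      _ ≤ (2 * p₁ ^ 2 + p₂ ^ 2 + q₂ ^ 2) * (2⁻¹ : ℝ) ^ j := by
          rw [div_eq_mul_inv, ← inv_pow]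
          apply mul_le_mul_of_nonneg_left _ (by nlinarith)
          apply pow_le_pow_of_le_one (by norm_num) (by norm_num) (by omega)
  -- integral bound
  have hintbound : ∀ kj : ℕ × ℕ, (∫⁻ ω, ENNReal.ofReal (f kj ω) ∂μ)
      ≤ (if kj.1 < kj.2 then K * (2⁻¹ : ℝ≥0∞) ^ kj.2 else 0) := by
    intro kj
    by_cases h : kj.1 < kj.2
    · rw [if_pos h]
      have step1 : (∫⁻ ω, ENNReal.ofReal (f kj ω) ∂μ) ≤
          ∫⁻ ω, ENNReal.ofReal ((2 * ((ω.1 kj.1 : ℕ) : ℝ) ^ 2 + ((ω.1 kj.2 : ℕ) : ℝ) ^ 2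
            + ((ω.2 kj.2 : ℕ) : ℝ) ^ 2)) * ENNReal.ofReal ((2⁻¹ : ℝ) ^ kj.2) ∂μ := by
        apply lintegral_mono; intro ω
        dsimp only
        rw [← ENNReal.ofReal_mul (by positivity)]
        exact ENNReal.ofReal_le_ofReal (hptwise kj h ω)
      have step2 : (∫⁻ ω, ENNReal.ofReal ((2 * ((ω.1 kj.1 : ℕ) : ℝ) ^ 2 + ((ω.1 kj.2 : ℕ) : ℝ) ^ 2
            + ((ω.2 kj.2 : ℕ) : ℝ) ^ 2)) * ENNReal.ofReal ((2⁻¹ : ℝ) ^ kj.2) ∂μ)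
          = (∫⁻ ω, ENNReal.ofReal ((2 * ((ω.1 kj.1 : ℕ) : ℝ) ^ 2 + ((ω.1 kj.2 : ℕ) : ℝ) ^ 2
            + ((ω.2 kj.2 : ℕ) : ℝ) ^ 2)) ∂μ) * ENNReal.ofReal ((2⁻¹ : ℝ) ^ kj.2) :=
        lintegral_mul_const' _ _ ENNReal.ofReal_ne_top
      have step3 : (∫⁻ ω, ENNReal.ofReal ((2 * ((ω.1 kj.1 : ℕ) : ℝ) ^ 2 + ((ω.1 kj.2 : ℕ) : ℝ) ^ 2
            + ((ω.2 kj.2 : ℕ) : ℝ) ^ 2)) ∂μ) = K := by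
        have heq : ∀ ω : NSeq × NSeq, ENNReal.ofReal ((2 * ((ω.1 kj.1 : ℕ) : ℝ) ^ 2
            + ((ω.1 kj.2 : ℕ) : ℝ) ^ 2 + ((ω.2 kj.2 : ℕ) : ℝ) ^ 2))
            = ENNReal.ofReal (((ω.1 kj.1 : ℕ) : ℝ) ^ 2) + ENNReal.ofReal (((ω.1 kj.1 : ℕ) : ℝ) ^ 2)
              + ENNReal.ofReal (((ω.1 kj.2 : ℕ) : ℝ) ^ 2) + ENNReal.ofReal (((ω.2 kj.2 : ℕ) : ℝ) ^ 2) := by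
          intro ω
          rw [← ENNReal.ofReal_add (by positivity) (by positivity),
            ← ENNReal.ofReal_add (by positivity) (by positivity),
            ← ENNReal.ofReal_add (by positivity) (by positivity)]
          ring_nf
        rw [lintegral_congr heq]
        have m1 : Measurable fun ω : NSeq × NSeq => ENNReal.ofReal (((ω.1 kj.1 : ℕ) : ℝ) ^ 2) :=
          ENNReal.measurable_ofReal.comp ((meas1 kj.1).pow measurable_const)
        have m2 : Measurable fun ω : NSeq × NSeq => ENNReal.ofReal (((ω.1 kj.2 : ℕ) : ℝ) ^ 2) :=
          ENNReal.measurable_ofReal.comp ((meas1 kj.2).pow measurable_const)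
        have m3 : Measurable fun ω : NSeq × NSeq => ENNReal.ofReal (((ω.2 kj.2 : ℕ) : ℝ) ^ 2) :=
          ENNReal.measurable_ofReal.comp ((meas2 kj.2).pow measurable_const)
        rw [lintegral_add_right _ m3, lintegral_add_right _ m2, lintegral_add_right _ m1,
          hInv1, hInv1, hInv2, hK]
        ring
      have step4 : ENNReal.ofReal ((2⁻¹ : ℝ) ^ kj.2) = (2⁻¹ : ℝ≥0∞) ^ kj.2 := by
        rw [ENNReal.ofReal_pow (by norm_num)]
        congr 1
        rw [ENNReal.ofReal_inv_of_pos (by norm_num)]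
        norm_num
      calc (∫⁻ ω, ENNReal.ofReal (f kj ω) ∂μ) ≤ _ := step1
        _ = _ := step2
        _ = K * (2⁻¹ : ℝ≥0∞) ^ kj.2 := by rw [step3, step4]
    · rw [if_neg h]
      have : ∀ ω : NSeq × NSeq, ENNReal.ofReal (f kj ω) = 0 := by
        intro ω; simp only [hf, if_neg h]; simp
      simp [lintegral_congr this]
  -- sum of the bounds is finite
  have hsumbound : (∑' kj : ℕ × ℕ, (if kj.1 < kj.2 then K * (2⁻¹ : ℝ≥0∞) ^ kj.2 else 0)) ≠ ⊤ := by
    rw [ENNReal.tsum_prod', ENNReal.tsum_comm]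
    have hrow : ∀ j : ℕ, (∑' k : ℕ, (if k < j then K * (2⁻¹ : ℝ≥0∞) ^ j else 0))
        = (j : ℝ≥0∞) * (K * (2⁻¹ : ℝ≥0∞) ^ j) := by
      intro j
      rw [tsum_eq_sum (s := Finset.range j)
        (by intro b hb; simp only [Finset.mem_range] at hb; simp [hb]),
        Finset.sum_congr rfl (fun k hk => if_pos (Finset.mem_range.1 hk)), Finset.sum_const,
        Finset.card_range, nsmul_eq_mul]
    rw [tsum_congr hrow]
    have hre : (∑' j : ℕ, (j : ℝ≥0∞) * (K * (2⁻¹ : ℝ≥0∞) ^ j))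
        = K * ∑' j : ℕ, (j : ℝ≥0∞) * (2⁻¹ : ℝ≥0∞) ^ j := by
      rw [← ENNReal.tsum_mul_left]; congr 1; ext j; ring
    rw [hre]
    apply ENNReal.mul_ne_top hKfin
    have hs : Summable fun n : ℕ => ((n : ℝ≥0) * (2⁻¹) ^ n) := by
      rw [← NNReal.summable_coe]
      have := summable_pow_mul_geometric_of_norm_lt_one (R := ℝ) 1 (r := 2⁻¹) (by norm_num)
      simpa using this
    have := ENNReal.tsum_coe_ne_top_iff_summable.2 hs
    convert this using 2 with n
    push_cast; ring
  -- integral of the total sum is finite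
  have hmeasΦ : Measurable fun ω => ∑' kj : ℕ × ℕ, ENNReal.ofReal (f kj ω) :=
    Measurable.ennreal_tsum fun kj => ENNReal.measurable_ofReal.comp (hfmeas kj)
  have hΦ : (∫⁻ ω, ∑' kj : ℕ × ℕ, ENNReal.ofReal (f kj ω) ∂μ) ≠ ⊤ := by
    have hm : ∀ kj : ℕ × ℕ, AEMeasurable (fun ω => ENNReal.ofReal (f kj ω)) μ :=
      fun kj => ((hfmeas kj).ennreal_ofReal).aemeasurable
    rw [lintegral_tsum hm]
    exact ne_top_of_le_ne_top hsumbound (ENNReal.tsum_le_tsum hintbound)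
  have hae : ∀ᵐ ω ∂μ, (∑' kj : ℕ × ℕ, ENNReal.ofReal (f kj ω)) < ⊤ :=
    ae_lt_top hmeasΦ hΦ
  filter_upwards [hae] with ω hω
  have hsum := ENNReal.summable_toReal hω.ne
  have : (fun kj : ℕ × ℕ => (ENNReal.ofReal (f kj ω)).toReal) = fun kj => f kj ω := by
    ext kj; exact ENNReal.toReal_ofReal (hfnn kj ω)
  rw [this] at hsum
  exact hsum
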